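/- Elimination of simultaneous charging and discharging: let η_in, η_out ∈ (0,1] and let δ^in, δ^out ∈ ℝ^𝒯 satisfy δ^in ≥ 0 and δ^out ≥ 0. Then there exist δ̃^in, δ̃^out ∈ ℝ^𝒯 such that for every t ∈ 𝒯: (i) 0 ≤ δ̃^in_t ≤ δ^in_t and 0 ≤ δ̃^out_t ≤ δ^out_t; (ii) min(δ̃^in_t, δ̃^out_t) = 0 (no simultaneous charge and discharge); (iii) the net energy exchanged with the grid is unchanged, η_out·δ̃^out_t − (1/η_in)·δ̃^in_t = η_out·δ^out_t − (1/η_in)·δ^in_t; and (iv) the stored-energy increment does not decrease, δ̃^in_t − δ̃^out_t ≥ δ^in_t − δ^out_t, with strict inequality at every t at which η_in·η_out < 1 and min(δ^in_t, δ^out_t) > 0. -/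

import Mathlib

/-- Elimination of simultaneous charging and discharging: any nonnegative
charge/discharge profiles can be replaced by profiles with no simultaneous charge and
discharge, the same net grid exchange, and a stored-energy increment that does not decrease
(strictly increasing at every time at which `ηin * ηout < 1` and both original profiles are
positive). -/
theorem no_simultaneous_charge_discharge
    {T : Type*} [Fintype T] [Nonempty T]
    (ηin ηout : ℝ)
    (hηin : ηin ∈ Set.Ioc (0 : ℝ) 1) (hηout : ηout ∈ Set.Ioc (0 : ℝ) 1)
    (δin δout : T → ℝ) (hin : ∀ t, 0 ≤ δin t) (hout : ∀ t, 0 ≤ δout t) :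
    ∃ δin' δout' : T → ℝ,
      (∀ t, 0 ≤ δin' t ∧ δin' t ≤ δin t ∧ 0 ≤ δout' t ∧ δout' t ≤ δout t) ∧
      (∀ t, min (δin' t) (δout' t) = 0) ∧
      (∀ t, ηout * δout' t - (1 / ηin) * δin' t =
        ηout * δout t - (1 / ηin) * δin t) ∧
      (∀ t, δin t - δout t ≤ δin' t - δout' t) ∧
      (∀ t, ηin * ηout < 1 → 0 < min (δin t) (δout t) →
        δin t - δout t < δin' t - δout' t) := by
  obtain ⟨hin0, hin1⟩ := hηin
  obtain ⟨hout0, hout1⟩ := hηout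
  have hη3 : ηin * ηout ≤ 1 := by nlinarith
  refine ⟨fun t => if 0 ≤ ηout * δout t - (1 / ηin) * δin t then 0
            else -(ηin * (ηout * δout t - (1 / ηin) * δin t)),
          fun t => if 0 ≤ ηout * δout t - (1 / ηin) * δin t then
            (ηout * δout t - (1 / ηin) * δin t) / ηout else 0, ?_, ?_, ?_, ?_, ?_⟩ <;>
    intro t <;>
    have he : (1 / ηin) * δin t = δin t / ηin := by ring
  all_goals
    have he0 : 0 ≤ δin t / ηin := div_nonneg (hin t) hin0.le
    have he1 : ηin * (δin t / ηin) = δin t := by field_simp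
    have h1 := hin t
    have h2 := hout t
    dsimp only
    rw [he]
    split_ifs with h
  · refine ⟨le_refl 0, h1, div_nonneg h hout0.le, ?_⟩
    rw [div_le_iff₀ hout0]
    nlinarith
  · push_neg at h
    refine ⟨?_, ?_, le_refl 0, h2⟩
    · nlinarith
    · nlinarith [he1, mul_nonneg (mul_nonneg hin0.le hout0.le) h2]
  · exact min_eq_left (div_nonneg h hout0.le)
  · push_neg at h
    exact min_eq_right (by nlinarith)
  · field_simp; ring
  · field_simp; ring
  · have hd : δin t / ηin ≤ δin t / (ηin * ηout) := by
      apply div_le_div_of_nonneg_left (hin t) (by positivity)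
      nlinarith
    rw [sub_le_sub_iff, ← sub_le_iff_le_add']
    have : (ηout * δout t - δin t / ηin) / ηout = δout t - δin t / (ηin * ηout) := by
      field_simp
    rw [this]
    nlinarith [he1]
  · push_neg at h
    nlinarith [he1, mul_nonneg (mul_nonneg hin0.le hout0.le) h2]
  all_goals intro hlt hmin
  all_goals rw [lt_min_iff] at hmin; obtain ⟨hp1, hp2⟩ := hmin
  · have hkey : δin t / ηin < δin t / (ηin * ηout) ∨ ηout = 1 := by
      rcases lt_or_eq_of_le hout1 with h' | h'
      · left
        apply div_lt_div_of_pos_left hp1 (by positivity)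
        nlinarith
      · right; exact h'
    have this2 : (ηout * δout t - δin t / ηin) / ηout = δout t - δin t / (ηin * ηout) := by
      field_simp
    rw [sub_lt_sub_iff, ← sub_lt_iff_lt_add', this2]
    rcases hkey with hk | hk
    · nlinarith [he1, he0]
    · subst hk
      have hgt : δin t < δin t / (ηin * 1) := by
        rw [mul_one, lt_div_iff₀ hin0]
        nlinarith
      nlinarith [hgt]
  · push_neg at h
    nlinarith [he1, mul_pos (mul_pos hin0 hout0) hp2, mul_pos hin0 hp2]
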